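/- Let 0 = x_0 < x_1 < ... < x_n < 1 be the sorted first n elements of the van der Corput sequence in base 2 together with 0. Then for every i and every r ≥ 1 (cyclic indices), the cyclic length from x_i to x_{i+r} is at most 1 − x_{n+1−r}. -/

import Mathlib

/-- The van der Corput sequence in base 2: binary radical inverse of `m`. -/
noncomputable def vdc (m : ℕ) : ℝ :=
  ∑ j ∈ Finset.range m, if m.testBit j then (1 : ℝ) / 2 ^ (j + 1) else 0

attribute [local instance] Classical.propDecidable

lemma vdc_zero : vdc 0 = 0 := by simp [vdc]

lemma vdc_eq_sum (m K : ℕ) (h : m ≤ K) :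
    vdc m = ∑ j ∈ Finset.range K, if m.testBit j then (1 : ℝ) / 2 ^ (j + 1) else 0 := by
  rw [vdc]
  apply Finset.sum_subset (Finset.range_subset_range.2 h)
  intro j hj hjm
  simp only [Finset.mem_range, not_lt] at hjm
  have : m.testBit j = false :=
    Nat.testBit_eq_false_of_lt
      (lt_of_lt_of_le (Nat.lt_two_pow_self (n := m)) (Nat.pow_le_pow_right (by norm_num) hjm))
  simp [this]

lemma vdc_two_mul (q : ℕ) : vdc (2 * q) = vdc q / 2 := by
  have h1 : vdc (2 * q) = ∑ j ∈ Finset.range (2 * q + 1),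
      if (2 * q).testBit j then (1 : ℝ) / 2 ^ (j + 1) else 0 :=
    vdc_eq_sum _ _ (by omega)
  rw [h1, Finset.sum_range_succ']
  have h0 : (2 * q).testBit 0 = false := by
    rw [Nat.testBit_zero]
    simp
  rw [h0]
  have h2 : vdc q = ∑ j ∈ Finset.range (2 * q),
      if q.testBit j then (1 : ℝ) / 2 ^ (j + 1) else 0 :=
    vdc_eq_sum _ _ (by omega)
  have hs : (∑ j ∈ Finset.range (2 * q),
      if (2 * q).testBit (j + 1) then (1 : ℝ) / 2 ^ (j + 1 + 1) else 0) = vdc q / 2 := by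
    rw [h2, Finset.sum_div]
    apply Finset.sum_congr rfl
    intro j _
    have ht : (2 * q).testBit (j + 1) = q.testBit j := by
      rw [Nat.testBit_add_one]
      congr 1
      omega
    rw [ht]
    split_ifs
    · rw [div_div, div_eq_div_iff (by positivity) (by positivity)]
      ring
    · simp
  rw [hs]
  norm_num

lemma vdc_two_mul_add_one (q : ℕ) : vdc (2 * q + 1) = 1 / 2 + vdc q / 2 := by
  have h1 : vdc (2 * q + 1) = ∑ j ∈ Finset.range (2 * q + 1),
      if (2 * q + 1).testBit j then (1 : ℝ) / 2 ^ (j + 1) else 0 :=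
    vdc_eq_sum _ _ (by omega)
  rw [h1, Finset.sum_range_succ']
  have h0 : (2 * q + 1).testBit 0 = true := by
    rw [Nat.testBit_zero]
    simp
  rw [h0]
  have h2 : vdc q = ∑ j ∈ Finset.range (2 * q),
      if q.testBit j then (1 : ℝ) / 2 ^ (j + 1) else 0 :=
    vdc_eq_sum _ _ (by omega)
  have hs : (∑ j ∈ Finset.range (2 * q),
      if (2 * q + 1).testBit (j + 1) then (1 : ℝ) / 2 ^ (j + 1 + 1) else 0) = vdc q / 2 := by
    rw [h2, Finset.sum_div]
    apply Finset.sum_congr rfl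
    intro j _
    have ht : (2 * q + 1).testBit (j + 1) = q.testBit j := by
      rw [Nat.testBit_add_one]
      congr 1
      omega
    rw [ht]
    split_ifs
    · rw [div_div, div_eq_div_iff (by positivity) (by positivity)]
      ring
    · simp
  simp only [if_true] at *
  rw [hs]
  norm_num
  ring

lemma vdc_nonneg (m : ℕ) : 0 ≤ vdc m := by
  apply Finset.sum_nonneg
  intro j _
  split_ifs
  · positivity
  · exact le_rfl

lemma vdc_lt_one (m : ℕ) : vdc m < 1 := by
  induction m using Nat.strong_induction_on with
  | _ m ih =>
    rcases Nat.eq_zero_or_pos m with h0 | h0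
    · rw [h0, vdc_zero]; norm_num
    rcases Nat.even_or_odd m with ⟨q, hq⟩ | ⟨q, hq⟩
    · have hqm : q < m := by omega
      rw [show m = 2 * q by omega, vdc_two_mul]
      have := ih q hqm
      linarith
    · have hqm : q < m := by omega
      rw [hq, vdc_two_mul_add_one]
      have := ih q hqm
      linarith

lemma vdc_inj_aux : ∀ s a b : ℕ, a + b ≤ s → vdc a = vdc b → a = b := by
  intro s
  induction s using Nat.strong_induction_on with
  | _ s ih =>
    intro a b hab h
    rcases Nat.eq_zero_or_pos s with h0 | h0
    · omega
    rcases Nat.even_or_odd a with ⟨p, hp⟩ | ⟨p, hp⟩ <;>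
      rcases Nat.even_or_odd b with ⟨q, hq⟩ | ⟨q, hq⟩
    · rw [show a = 2 * p by omega, show b = 2 * q by omega,
        vdc_two_mul, vdc_two_mul] at h
      have : vdc p = vdc q := by linarith
      have := ih (s - 1) (by omega) p q (by omega) this
      omega
    · exfalso
      rw [show a = 2 * p by omega, hq, vdc_two_mul, vdc_two_mul_add_one] at h
      have h1 := vdc_lt_one p
      have h2 := vdc_nonneg q
      linarith
    · exfalso
      rw [hp, show b = 2 * q by omega, vdc_two_mul_add_one, vdc_two_mul] at h
      have h1 := vdc_lt_one q
      have h2 := vdc_nonneg p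
      linarith
    · rw [hp, hq, vdc_two_mul_add_one, vdc_two_mul_add_one] at h
      have : vdc p = vdc q := by linarith
      have := ih (s - 1) (by omega) p q (by omega) this
      omega

lemma vdc_injective : Function.Injective vdc := by
  intro a b h
  exact vdc_inj_aux (a + b) a b le_rfl h

/-- Count of van der Corput points among the first `N` lying in `[a, b)`. -/
noncomputable def cnt (N : ℕ) (a b : ℝ) : ℕ :=
  ((Finset.range N).filter (fun m => a ≤ vdc m ∧ vdc m < b)).card

lemma cnt_mono_left {N N' : ℕ} (h : N ≤ N') (a b : ℝ) : cnt N a b ≤ cnt N' a b := by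
  apply Finset.card_le_card
  intro m hm
  simp only [Finset.mem_filter, Finset.mem_range] at hm ⊢
  exact ⟨by omega, hm.2⟩

lemma cnt_mono_right (N : ℕ) {a b b' : ℝ} (h : b ≤ b') : cnt N a b ≤ cnt N a b' := by
  apply Finset.card_le_card
  intro m hm
  simp only [Finset.mem_filter, Finset.mem_range] at hm ⊢
  exact ⟨hm.1, hm.2.1, lt_of_lt_of_le hm.2.2 h⟩

lemma cnt_split (K : ℕ) {u v w : ℝ} (h1 : u ≤ v) (h2 : v ≤ w) :
    cnt K u w = cnt K u v + cnt K v w := by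
  unfold cnt
  rw [← Finset.card_union_of_disjoint]
  · congr 1
    ext m
    simp only [Finset.mem_union, Finset.mem_filter, Finset.mem_range]
    constructor
    · rintro ⟨hm, h3, h4⟩
      by_cases hv : vdc m < v
      · exact Or.inl ⟨hm, h3, hv⟩
      · exact Or.inr ⟨hm, le_of_not_gt hv, h4⟩
    · rintro (⟨hm, h3, h4⟩ | ⟨hm, h3, h4⟩)
      · exact ⟨hm, h3, lt_of_lt_of_le h4 h2⟩
      · exact ⟨hm, le_trans h1 h3, h4⟩
  · rw [Finset.disjoint_left]
    rintro m hm1 hm2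
    simp only [Finset.mem_filter, Finset.mem_range] at hm1 hm2
    exact absurd hm2.2.1 (not_le.2 hm1.2.2)

lemma cnt_of_nonpos (K : ℕ) {a b : ℝ} (h : b ≤ a) : cnt K a b = 0 := by
  unfold cnt
  rw [Finset.card_eq_zero, Finset.filter_eq_empty_iff]
  intro m _
  rintro ⟨h1, h2⟩
  linarith

lemma cnt_of_le_zero (K : ℕ) {a b : ℝ} (h : b ≤ 0) : cnt K a b = 0 := by
  unfold cnt
  rw [Finset.card_eq_zero, Finset.filter_eq_empty_iff]
  intro m _
  rintro ⟨h1, h2⟩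
  have := vdc_nonneg m
  linarith

lemma cnt_of_one_le (K : ℕ) {a b : ℝ} (h : 1 ≤ a) : cnt K a b = 0 := by
  unfold cnt
  rw [Finset.card_eq_zero, Finset.filter_eq_empty_iff]
  intro m _
  rintro ⟨h1, h2⟩
  have := vdc_lt_one m
  linarith

lemma cnt_clip_left (K : ℕ) {a b : ℝ} (h : a ≤ 0) : cnt K a b = cnt K 0 b := by
  unfold cnt
  congr 1
  apply Finset.filter_congr
  intro m _
  have h1 := vdc_nonneg m
  constructor
  · rintro ⟨_, h3⟩; exact ⟨h1, h3⟩
  · rintro ⟨_, h3⟩; exact ⟨le_trans h h1, h3⟩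

lemma cnt_clip_right (K : ℕ) {a b : ℝ} (h : 1 ≤ b) : cnt K a b = cnt K a 1 := by
  unfold cnt
  congr 1
  apply Finset.filter_congr
  intro m _
  have h1 := vdc_lt_one m
  constructor
  · rintro ⟨h2, _⟩; exact ⟨h2, h1⟩
  · rintro ⟨h2, _⟩; exact ⟨h2, lt_of_lt_of_le h1 h⟩

lemma cnt_full (K : ℕ) : cnt K 0 1 = K := by
  unfold cnt
  rw [Finset.filter_true_of_mem, Finset.card_range]
  intro m _
  exact ⟨vdc_nonneg m, vdc_lt_one m⟩

lemma cnt_succ (N : ℕ) (a b : ℝ) :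
    cnt (N + 1) a b = cnt N a b + (if a ≤ vdc N ∧ vdc N < b then 1 else 0) := by
  unfold cnt
  rw [Finset.range_add_one, Finset.filter_insert]
  split_ifs with h
  · rw [Finset.card_insert_of_notMem (by simp)]
  · simp

lemma cnt_rec (N : ℕ) (a b : ℝ) :
    cnt N a b = cnt ((N + 1) / 2) (2 * a) (2 * b) + cnt (N / 2) (2 * a - 1) (2 * b - 1) := by
  induction N with
  | zero => simp [cnt]
  | succ N ihN =>
    rw [cnt_succ, ihN]
    rcases Nat.even_or_odd N with ⟨q, hq⟩ | ⟨q, hq⟩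
    · -- N = 2q : (N+2)/2 = q+1, (N+1)/2 = q ; (N/2) = q
      rw [show N = 2 * q by omega]
      rw [show (2 * q + 1 + 1) / 2 = q + 1 by omega, show (2 * q + 1) / 2 = q by omega,
        show (2 * q) / 2 = q by omega]
      rw [cnt_succ q (2*a) (2*b)]
      have heq : (a ≤ vdc (2 * q) ∧ vdc (2 * q) < b) ↔ (2*a ≤ vdc q ∧ vdc q < 2*b) := by
        rw [vdc_two_mul]
        constructor <;> rintro ⟨h1, h2⟩ <;> constructor <;> linarith
      by_cases h : 2*a ≤ vdc q ∧ vdc q < 2*b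
      · rw [if_pos h, if_pos (heq.2 h)]; ring
      · rw [if_neg h, if_neg (fun hh => h (heq.1 hh))]
        ring
    · -- N = 2q+1
      rw [hq]
      rw [show (2 * q + 1 + 1 + 1) / 2 = q + 1 by omega,
        show (2 * q + 1 + 1) / 2 = q + 1 by omega,
        show (2 * q + 1) / 2 = q by omega]
      rw [cnt_succ q (2*a - 1) (2*b - 1)]
      have heq : (a ≤ vdc (2 * q + 1) ∧ vdc (2 * q + 1) < b) ↔
          (2*a - 1 ≤ vdc q ∧ vdc q < 2*b - 1) := by
        rw [vdc_two_mul_add_one]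
        constructor <;> rintro ⟨h1, h2⟩ <;> constructor <;> linarith
      by_cases h : 2*a - 1 ≤ vdc q ∧ vdc q < 2*b - 1
      · rw [if_pos h, if_pos (heq.2 h)]; ring
      · rw [if_neg h, if_neg (fun hh => h (heq.1 hh))]
        ring

lemma cnt_congr (K : ℕ) {a a' b b' : ℝ} (h1 : a = a') (h2 : b = b') :
    cnt K a b = cnt K a' b' := by rw [h1, h2]

lemma cnt_one (u v : ℝ) : cnt 1 u v = if u ≤ 0 ∧ 0 < v then 1 else 0 := by
  unfold cnt
  rw [show Finset.range 1 = {0} from rfl, Finset.filter_singleton, vdc_zero]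
  split_ifs <;> simp

lemma cnt_main : ∀ N : ℕ,
    (∀ a b : ℝ, 0 ≤ a → b ≤ 1 → cnt N a b ≤ cnt N 0 (b - a)) ∧
    (∀ a b : ℝ, 0 ≤ a → b ≤ 1 → cnt N (1 - (b - a)) 1 ≤ cnt N a b) := by
  intro N
  induction N using Nat.strong_induction_on with
  | _ N ih =>
  rcases Nat.lt_or_ge N 2 with hN | hN
  · interval_cases N
    · constructor <;> intro a b ha hb <;> simp [cnt]
    · constructor <;> intro a b ha hb <;> rw [cnt_one, cnt_one]
      · split_ifs with h1 h2
        · exact le_rfl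
        · exact absurd ⟨le_rfl, by linarith [h1.1, h1.2]⟩ h2
        · exact Nat.zero_le _
        · exact le_rfl
      · split_ifs with h1 h2
        · exact le_rfl
        · exact absurd ⟨by linarith [h1.1], by linarith [h1.1]⟩ h2
        · exact Nat.zero_le _
        · exact le_rfl
  · have hc : (N + 1) / 2 < N := by omega
    have hf : N / 2 < N := by omega
    have hfc : N / 2 ≤ (N + 1) / 2 := by omega
    obtain ⟨Mc, M2c⟩ := ih _ hc
    obtain ⟨Mf, M2f⟩ := ih _ hf
    constructor
    · -- prefix intervals maximize counts
      intro a b ha hb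
      rcases le_or_gt b a with hba | hba
      · rw [cnt_of_nonpos N hba]; exact Nat.zero_le _
      have hL := cnt_rec N a b
      have hR := cnt_rec N 0 (b - a)
      rw [show (2:ℝ) * 0 - 1 = -1 by ring] at hR
      rw [show (2:ℝ) * 0 = 0 by ring] at hR
      rw [cnt_clip_left (N/2) (by norm_num : (-1:ℝ) ≤ 0)] at hR
      rcases le_or_gt b (1/2) with hb2 | hb2
      · -- interval in left half
        have h1 : cnt (N/2) (2*a-1) (2*b-1) = 0 := cnt_of_le_zero _ (by linarith)
        have h2 : cnt ((N+1)/2) (2*a) (2*b) ≤ cnt ((N+1)/2) 0 (2*b - 2*a) :=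
          Mc (2*a) (2*b) (by linarith) (by linarith)
        have h3 : cnt ((N+1)/2) 0 (2*b - 2*a) = cnt ((N+1)/2) 0 (2*(b-a)) :=
          cnt_congr _ rfl (by ring)
        rw [hL, hR, h1]
        omega
      rcases le_or_gt (1/2) a with ha2 | ha2
      · -- interval in right half
        have h1 : cnt ((N+1)/2) (2*a) (2*b) = 0 := cnt_of_one_le _ (by linarith)
        have h2 : cnt (N/2) (2*a-1) (2*b-1) ≤ cnt (N/2) 0 ((2*b-1) - (2*a-1)) :=
          Mf _ _ (by linarith) (by linarith)
        have h3 : cnt (N/2) 0 ((2*b-1) - (2*a-1)) = cnt (N/2) 0 (2*(b-a)) :=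
          cnt_congr _ rfl (by ring)
        have h4 : cnt (N/2) 0 (2*(b-a)) ≤ cnt ((N+1)/2) 0 (2*(b-a)) :=
          cnt_mono_left hfc _ _
        rw [hL, hR, h1]
        omega
      · -- straddling interval
        have hcl1 : cnt ((N+1)/2) (2*a) (2*b) = cnt ((N+1)/2) (2*a) 1 :=
          cnt_clip_right _ (by linarith)
        have hcl2 : cnt (N/2) (2*a-1) (2*b-1) = cnt (N/2) 0 (2*b-1) := by
          rw [cnt_clip_left _ (by linarith : 2*a-1 ≤ 0)]
        rcases le_or_gt (b - a) (1/2) with hl2 | hl2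
        · have hsp : cnt ((N+1)/2) 0 (2*(b-a)) =
              cnt ((N+1)/2) 0 (2*b-1) + cnt ((N+1)/2) (2*b-1) (2*(b-a)) :=
            cnt_split _ (by linarith) (by linarith)
          have h5 : cnt (N/2) 0 (2*b-1) ≤ cnt ((N+1)/2) 0 (2*b-1) := cnt_mono_left hfc _ _
          have h6 := M2c (2*b-1) (2*b-2*a) (by linarith) (by linarith)
          have h6a : cnt ((N+1)/2) (1 - (2*b-2*a - (2*b-1))) 1 = cnt ((N+1)/2) (2*a) 1 :=
            cnt_congr _ (by ring) rfl
          have h6b : cnt ((N+1)/2) (2*b-1) (2*b-2*a) = cnt ((N+1)/2) (2*b-1) (2*(b-a)) :=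
            cnt_congr _ rfl (by ring)
          rw [h6a, h6b] at h6
          rw [hL, hR, hcl1, hcl2, hsp]
          omega
        · have hRclip : cnt ((N+1)/2) 0 (2*(b-a)) = cnt ((N+1)/2) 0 1 :=
            cnt_clip_right _ (by linarith)
          have hsp : cnt (N/2) 0 (2*b-1) =
              cnt (N/2) 0 (2*(b-a)-1) + cnt (N/2) (2*(b-a)-1) (2*b-1) :=
            cnt_split _ (by linarith) (by linarith)
          have h7 := Mf (2*(b-a)-1) (2*b-1) (by linarith) (by linarith)
          have h7a : cnt (N/2) 0 (2*b-1 - (2*(b-a)-1)) = cnt (N/2) 0 (2*a) :=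
            cnt_congr _ rfl (by ring)
          rw [h7a] at h7
          have h8 : cnt (N/2) 0 (2*a) ≤ cnt ((N+1)/2) 0 (2*a) := cnt_mono_left hfc _ _
          have h9 : cnt ((N+1)/2) 0 1 =
              cnt ((N+1)/2) 0 (2*a) + cnt ((N+1)/2) (2*a) 1 :=
            cnt_split _ (by linarith) (by linarith)
          rw [hL, hR, hcl1, hcl2, hRclip, hsp]
          omega
    · -- suffix intervals minimize counts
      intro a b ha hb
      rcases le_or_gt b a with hba | hba
      · rw [cnt_of_one_le N (by linarith : (1:ℝ) ≤ 1 - (b-a))]; exact Nat.zero_le _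
      have hR := cnt_rec N a b
      have hL := cnt_rec N (1 - (b-a)) 1
      rw [show (2:ℝ) * (1 - (b-a)) - 1 = 1 - 2*b + 2*a by ring] at hL
      rw [show (2:ℝ) * (1 - (b-a)) = 2 - 2*b + 2*a by ring] at hL
      rw [show (2:ℝ) * 1 - 1 = 1 by ring] at hL
      rw [show (2:ℝ) * 1 = 2 by ring] at hL
      rw [cnt_clip_right ((N+1)/2) (by norm_num : (1:ℝ) ≤ 2)] at hL
      rcases le_or_gt b (1/2) with hb2 | hb2
      · have h1 : cnt ((N+1)/2) (2 - 2*b + 2*a) 1 = 0 := cnt_of_one_le _ (by linarith)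
        have h2 := M2c (2*a) (2*b) (by linarith) (by linarith)
        have h2a : cnt ((N+1)/2) (1 - (2*b - 2*a)) 1 = cnt ((N+1)/2) (1 - 2*b + 2*a) 1 :=
          cnt_congr _ (by ring) rfl
        rw [h2a] at h2
        have h3 : cnt (N/2) (1 - 2*b + 2*a) 1 ≤ cnt ((N+1)/2) (1 - 2*b + 2*a) 1 :=
          cnt_mono_left hfc _ _
        rw [hL, hR, h1]
        omega
      rcases le_or_gt (1/2) a with ha2 | ha2
      · have h1 : cnt ((N+1)/2) (2 - 2*b + 2*a) 1 = 0 := cnt_of_one_le _ (by linarith)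
        have h2 := M2f (2*a-1) (2*b-1) (by linarith) (by linarith)
        have h2a : cnt (N/2) (1 - (2*b-1 - (2*a-1))) 1 = cnt (N/2) (1 - 2*b + 2*a) 1 :=
          cnt_congr _ (by ring) rfl
        rw [h2a] at h2
        rw [hL, hR, h1]
        omega
      · have hcl1 : cnt ((N+1)/2) (2*a) (2*b) = cnt ((N+1)/2) (2*a) 1 :=
          cnt_clip_right _ (by linarith)
        have hcl2 : cnt (N/2) (2*a-1) (2*b-1) = cnt (N/2) 0 (2*b-1) := by
          rw [cnt_clip_left _ (by linarith : 2*a-1 ≤ 0)]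
        rcases le_or_gt (b - a) (1/2) with hl2 | hl2
        · have h1 : cnt ((N+1)/2) (2 - 2*b + 2*a) 1 = 0 := cnt_of_one_le _ (by linarith)
          have hsp : cnt (N/2) (1 - 2*b + 2*a) 1 =
              cnt (N/2) (1 - 2*b + 2*a) (2*a) + cnt (N/2) (2*a) 1 :=
            cnt_split _ (by linarith) (by linarith)
          have h5 : cnt (N/2) (2*a) 1 ≤ cnt ((N+1)/2) (2*a) 1 := cnt_mono_left hfc _ _
          have h6 := Mf (1 - 2*b + 2*a) (2*a) (by linarith) (by linarith)
          have h6a : cnt (N/2) 0 (2*a - (1 - 2*b + 2*a)) = cnt (N/2) 0 (2*b-1) :=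
            cnt_congr _ rfl (by ring)
          rw [h6a] at h6
          rw [hL, hR, hcl1, hcl2, h1, hsp]
          omega
        · have h1 : cnt (N/2) (1 - 2*b + 2*a) 1 = cnt (N/2) 0 1 := by
            rw [cnt_clip_left _ (by linarith : 1 - 2*b + 2*a ≤ 0)]
          have hsp2 : cnt (N/2) 0 1 = cnt (N/2) 0 (2*b-1) + cnt (N/2) (2*b-1) 1 :=
            cnt_split _ (by linarith) (by linarith)
          have hsp3 : cnt ((N+1)/2) (2*a) 1 =
              cnt ((N+1)/2) (2*a) (2 - 2*b + 2*a) + cnt ((N+1)/2) (2 - 2*b + 2*a) 1 :=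
            cnt_split _ (by linarith) (by linarith)
          have h8 : cnt (N/2) (2*b-1) 1 ≤ cnt ((N+1)/2) (2*b-1) 1 := cnt_mono_left hfc _ _
          have h9 := M2c (2*a) (2 - 2*b + 2*a) (by linarith) (by linarith)
          have h9a : cnt ((N+1)/2) (1 - (2 - 2*b + 2*a - 2*a)) 1 = cnt ((N+1)/2) (2*b-1) 1 :=
            cnt_congr _ (by ring) rfl
          rw [h9a] at h9
          rw [hL, hR, hcl1, hcl2, h1, hsp2]
          omega

theorem stmt_11 (n : ℕ) (x : ℕ → ℝ)
    (hx0 : x 0 = 0)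
    (hmono : ∀ i j, i < j → j ≤ n → x i < x j)
    (hlt1 : x n < 1)
    (himg : ∀ y : ℝ, (∃ i, i ≤ n ∧ x i = y) ↔
      (y = 0 ∨ ∃ m, 1 ≤ m ∧ m ≤ n ∧ vdc m = y)) :
    ∀ i ≤ n, ∀ r, 1 ≤ r → r ≤ n →
      (if i + r ≤ n then x (i + r) - x i
       else (1 - x i) + x ((i + r) % (n + 1))) ≤ 1 - x (n + 1 - r) := by
  have hx_nonneg : ∀ i, i ≤ n → 0 ≤ x i := by
    intro i hi
    rcases Nat.eq_zero_or_pos i with h | h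
    · rw [h, hx0]
    · have := hmono 0 i h hi
      linarith [hx0.ge, hx0.le]
  have hx_lt_one : ∀ i, i ≤ n → x i < 1 := by
    intro i hi
    rcases eq_or_lt_of_le hi with h | h
    · rw [h]; exact hlt1
    · exact lt_trans (hmono i n h le_rfl) hlt1
  have hx_le : ∀ i j, i ≤ j → j ≤ n → x i ≤ x j := by
    intro i j hij hj
    rcases eq_or_lt_of_le hij with h | h
    · rw [h]
    · exact le_of_lt (hmono i j h hj)
  have hx_inj : Set.InjOn x (Finset.range (n+1) : Finset ℕ) := by
    intro i hi j hj hij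
    simp only [Finset.coe_range, Set.mem_Iio] at hi hj
    rcases lt_trichotomy i j with h | h | h
    · exact absurd hij (ne_of_lt (hmono i j h (by omega)))
    · exact h
    · exact absurd hij.symm (ne_of_lt (hmono j i h (by omega)))
  have hximg : (Finset.range (n+1)).image x = (Finset.range (n+1)).image vdc := by
    ext y
    simp only [Finset.mem_image, Finset.mem_range, Nat.lt_succ_iff]
    constructor
    · rintro ⟨i, hi, rfl⟩
      have := (himg (x i)).1 ⟨i, hi, rfl⟩
      rcases this with h | ⟨m, _, h2, h3⟩
      · exact ⟨0, Nat.zero_le n, by rw [vdc_zero, h]⟩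
      · exact ⟨m, h2, h3⟩
    · rintro ⟨m, hm, rfl⟩
      rcases Nat.eq_zero_or_pos m with h | h
      · obtain ⟨i, hi, hxi⟩ := (himg (vdc m)).2 (Or.inl (by rw [h, vdc_zero]))
        exact ⟨i, hi, hxi⟩
      · obtain ⟨i, hi, hxi⟩ := (himg (vdc m)).2 (Or.inr ⟨m, h, hm, rfl⟩)
        exact ⟨i, hi, hxi⟩
  have hcount : ∀ u v : ℝ,
      ((Finset.range (n+1)).filter (fun i => u ≤ x i ∧ x i < v)).card = cnt (n+1) u v := by
    intro u v
    have e1 : (((Finset.range (n+1)).image x).filter (fun y => u ≤ y ∧ y < v)).card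
        = ((Finset.range (n+1)).filter (fun i => u ≤ x i ∧ x i < v)).card := by
      rw [Finset.filter_image]
      exact Finset.card_image_of_injOn
        (hx_inj.mono (Finset.coe_subset.2 (Finset.filter_subset _ _)))
    have e2 : (((Finset.range (n+1)).image vdc).filter (fun y => u ≤ y ∧ y < v)).card
        = ((Finset.range (n+1)).filter (fun m => u ≤ vdc m ∧ vdc m < v)).card := by
      rw [Finset.filter_image]
      exact Finset.card_image_of_injOn (vdc_injective.injOn)
    rw [← e1, hximg, e2]
    rfl
  have hF0 : ∀ a : ℕ, a ≤ n → cnt (n+1) 0 (x a) = a := by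
    intro a hA
    rw [← hcount]
    have he : (Finset.range (n+1)).filter (fun i => 0 ≤ x i ∧ x i < x a) = Finset.range a := by
      ext i
      simp only [Finset.mem_filter, Finset.mem_range]
      constructor
      · rintro ⟨h1, _, h3⟩
        by_contra hia
        push_neg at hia
        exact absurd h3 (not_lt.2 (hx_le a i hia (by omega)))
      · intro hia
        exact ⟨by omega, hx_nonneg i (by omega), hmono i a hia hA⟩
    rw [he, Finset.card_range]
  have hF1 : ∀ a : ℕ, a ≤ n → cnt (n+1) (x a) 1 = n + 1 - a := by
    intro a hA
    rw [← hcount]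
    have he : (Finset.range (n+1)).filter (fun i => x a ≤ x i ∧ x i < 1)
        = Finset.Ico a (n+1) := by
      ext i
      simp only [Finset.mem_filter, Finset.mem_range, Finset.mem_Ico]
      constructor
      · rintro ⟨h1, h2, _⟩
        refine ⟨?_, h1⟩
        by_contra hia
        push_neg at hia
        exact absurd h2 (not_le.2 (hmono i a hia hA))
      · rintro ⟨h1, h2⟩
        exact ⟨h2, hx_le a i h1 (by omega), hx_lt_one i (by omega)⟩
    rw [he, Nat.card_Ico]
  obtain ⟨M, M2⟩ := cnt_main (n+1)
  have hsuper : ∀ a b : ℕ, a + b ≤ n → x a + x b ≤ x (a+b) := by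
    intro a b hab
    by_contra hcon
    push_neg at hcon
    have ha' : a ≤ n := by omega
    have hb' : b ≤ n := by omega
    have hsum1 : x a + x b ≤ 1 := by
      by_contra h1
      push_neg at h1
      have k1 : cnt (n+1) (x a) 1 ≤ cnt (n+1) 0 (1 - x a) :=
        M (x a) 1 (hx_nonneg a ha') le_rfl
      have k2 : cnt (n+1) 0 (1 - x a) ≤ cnt (n+1) 0 (x b) :=
        cnt_mono_right _ (by linarith)
      rw [hF1 a ha'] at k1
      rw [hF0 b hb'] at k2
      omega
    have k3 : a + b + 1 ≤ cnt (n+1) 0 (x a + x b) := by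
      rw [← hcount]
      have hsub : Finset.range (a+b+1) ⊆
          (Finset.range (n+1)).filter (fun i => 0 ≤ x i ∧ x i < x a + x b) := by
        intro i hi
        simp only [Finset.mem_range] at hi
        simp only [Finset.mem_filter, Finset.mem_range]
        refine ⟨by omega, hx_nonneg i (by omega), ?_⟩
        calc x i ≤ x (a+b) := hx_le i (a+b) (by omega) hab
        _ < x a + x b := hcon
      calc a+b+1 = (Finset.range (a+b+1)).card := (Finset.card_range _).symm
      _ ≤ _ := Finset.card_le_card hsub
    have k4 : cnt (n+1) 0 (x a + x b) = cnt (n+1) 0 (x a) + cnt (n+1) (x a) (x a + x b) :=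
      cnt_split _ (hx_nonneg a ha') (by linarith [hx_nonneg b hb'])
    have k5 : cnt (n+1) (x a) (x a + x b) ≤ cnt (n+1) 0 (x a + x b - x a) :=
      M _ _ (hx_nonneg a ha') hsum1
    have k6 : cnt (n+1) 0 (x a + x b - x a) = cnt (n+1) 0 (x b) := cnt_congr _ rfl (by ring)
    rw [hF0 a ha'] at k4
    rw [k6, hF0 b hb'] at k5
    omega
  have hcross : ∀ u v : ℕ, u ≤ n → v ≤ n → n + 1 ≤ u + v →
      x u + x v ≤ 1 + x (u + v - (n+1)) := by
    intro u v hu hv huv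
    by_contra hcon
    push_neg at hcon
    have hwn : u + v - (n+1) ≤ n := by omega
    have ht0 : 0 ≤ x u + x v - 1 := by
      have := hx_nonneg (u + v - (n+1)) hwn
      linarith
    have k1 : cnt (n+1) (x u + x v - 1) 1 ≤ n - (u + v - (n+1)) := by
      rw [← hcount]
      have hsub : (Finset.range (n+1)).filter (fun i => x u + x v - 1 ≤ x i ∧ x i < 1)
          ⊆ Finset.Ico (u + v - (n+1) + 1) (n+1) := by
        intro i hi
        simp only [Finset.mem_filter, Finset.mem_range] at hi
        simp only [Finset.mem_Ico]
        refine ⟨?_, hi.1⟩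
        by_contra hiw
        push_neg at hiw
        have : x i ≤ x (u + v - (n+1)) := hx_le i (u + v - (n+1)) (by omega) hwn
        linarith [hi.2.1]
      calc _ ≤ (Finset.Ico (u + v - (n+1) + 1) (n+1)).card := Finset.card_le_card hsub
      _ = n - (u + v - (n+1)) := by rw [Nat.card_Ico]; omega
    have k2 : cnt (n+1) (x u + x v - 1) 1
        = cnt (n+1) (x u + x v - 1) (x u) + cnt (n+1) (x u) 1 :=
      cnt_split _ (by linarith [hx_lt_one v hv]) (le_of_lt (hx_lt_one u hu))
    have k3 := M2 (x u + x v - 1) (x u) ht0 (le_of_lt (hx_lt_one u hu))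
    have k3a : cnt (n+1) (1 - (x u - (x u + x v - 1))) 1 = cnt (n+1) (x v) 1 :=
      cnt_congr _ (by ring) rfl
    rw [k3a] at k3
    rw [hF1 u hu] at k2
    rw [hF1 v hv] at k3
    omega
  intro i hi r hr1 hr2
  have hNr : n + 1 - r ≤ n := by omega
  by_cases hir : i + r ≤ n
  · rw [if_pos hir]
    have h := hcross (i+r) (n+1-r) hir hNr (by omega)
    have he : i + r + (n+1-r) - (n+1) = i := by omega
    rw [he] at h
    linarith
  · rw [if_neg hir]
    have hmod : (i + r) % (n+1) = i + r - (n+1) := by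
      rw [Nat.mod_eq_sub_mod (by omega)]
      exact Nat.mod_eq_of_lt (by omega)
    rw [hmod]
    have h := hsuper (i + r - (n+1)) (n+1-r) (by omega)
    have he : i + r - (n+1) + (n+1-r) = i := by omega
    rw [he] at h
    linarith
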